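/- Let T > 0, M > 0, and let w : [0,T] × ℝ → ℝ be twice continuously differentiable with w and ∂ₓw bounded, satisfying the inviscid Burgers equation ∂ₜw + w ∂ₓw = 0 on [0,T] × ℝ, and suppose 0 < ∂ₓw(0,x) ≤ M for all x ∈ ℝ. Then for all (t,x) ∈ [0,T] × ℝ one has 0 < ∂ₓw(t,x) ≤ M/(1 + Mt). -/

import Mathlib

open Set

theorem burgers_spatial_derivative_decay
    (T M : ℝ) (hT : 0 < T) (hM : 0 < M) (w : ℝ → ℝ → ℝ)
    (hreg : ContDiffOn ℝ 2 (fun p : ℝ × ℝ => w p.1 p.2) (Set.Icc 0 T ×ˢ Set.univ))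
    (hbdd : ∃ B : ℝ, ∀ t ∈ Set.Icc (0 : ℝ) T, ∀ x : ℝ,
      |w t x| ≤ B ∧ |deriv (fun x' => w t x') x| ≤ B)
    (hburgers : ∀ t ∈ Set.Icc (0 : ℝ) T, ∀ x : ℝ,
      derivWithin (fun s => w s x) (Set.Icc 0 T) t
        + w t x * deriv (fun x' => w t x') x = 0)
    (hinit : ∀ x : ℝ, 0 < deriv (fun x' => w 0 x') x ∧ deriv (fun x' => w 0 x') x ≤ M) :
    ∀ t ∈ Set.Icc (0 : ℝ) T, ∀ x : ℝ,
      0 < deriv (fun x' => w t x') x ∧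
      deriv (fun x' => w t x') x ≤ M / (1 + M * t) := by
  obtain ⟨B, hB⟩ := hbdd
  set S : Set (ℝ × ℝ) := Set.Icc 0 T ×ˢ (Set.univ : Set ℝ) with hSdef
  set W : ℝ × ℝ → ℝ := fun p => w p.1 p.2 with hWdef
  have hSmem : ∀ {t x : ℝ}, t ∈ Set.Icc (0:ℝ) T → (t, x) ∈ S := by
    intro t x ht; exact ⟨ht, trivial⟩
  have hUD : UniqueDiffOn ℝ (Set.Icc (0:ℝ) T) := uniqueDiffOn_Icc hT
  have hdiff : DifferentiableOn ℝ W S := hreg.differentiableOn two_ne_zero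
  -- the full Fréchet derivative
  have hHW : ∀ t x, t ∈ Set.Icc (0:ℝ) T →
      HasFDerivWithinAt W (fderivWithin ℝ W S (t, x)) S (t, x) := by
    intro t x ht
    exact (hdiff (t, x) (hSmem ht)).hasFDerivWithinAt
  -- spatial derivative equals fderiv applied to (0,1)
  have hx_deriv : ∀ t x, t ∈ Set.Icc (0:ℝ) T →
      HasDerivAt (fun x' => w t x') (fderivWithin ℝ W S (t, x) (0, 1)) x := by
    intro t x ht
    have hcurve : HasDerivWithinAt (fun x' : ℝ => ((t, x') : ℝ × ℝ)) ((0:ℝ), (1:ℝ))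
        Set.univ x :=
      ((hasDerivWithinAt_const x Set.univ t).prodMk (hasDerivWithinAt_id x Set.univ))
    have := HasFDerivWithinAt.comp_hasDerivWithinAt x (hHW t x ht) hcurve
      (fun y _ => hSmem ht)
    rw [hasDerivWithinAt_univ] at this
    exact this
  have hx_deriv' : ∀ t x, t ∈ Set.Icc (0:ℝ) T →
      deriv (fun x' => w t x') x = fderivWithin ℝ W S (t, x) (0, 1) := by
    intro t x ht; exact (hx_deriv t x ht).deriv
  -- time derivative equals fderiv applied to (1,0)
  have ht_deriv : ∀ t x, t ∈ Set.Icc (0:ℝ) T →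
      HasDerivWithinAt (fun s => w s x) (fderivWithin ℝ W S (t, x) (1, 0))
        (Set.Icc 0 T) t := by
    intro t x ht
    have hcurve : HasDerivWithinAt (fun s : ℝ => ((s, x) : ℝ × ℝ)) ((1:ℝ), (0:ℝ))
        (Set.Icc 0 T) t :=
      ((hasDerivWithinAt_id t _).prodMk (hasDerivWithinAt_const t _ x))
    exact HasFDerivWithinAt.comp_hasDerivWithinAt t (hHW t x ht) hcurve
      (fun s hs => hSmem hs)
  -- Burgers in terms of fderiv
  have hburg2 : ∀ t x, t ∈ Set.Icc (0:ℝ) T →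
      fderivWithin ℝ W S (t, x) (1, 0)
        = - w t x * fderivWithin ℝ W S (t, x) (0, 1) := by
    intro t x ht
    have h1 := (ht_deriv t x ht).derivWithin (hUD t ht)
    have h2 := hburgers t ht x
    rw [h1, hx_deriv' t x ht] at h2
    linarith
  -- continuity of W on S
  have hcont : ContinuousOn W S := hreg.continuousOn
  -- Step 1: w is constant along characteristic lines
  have hchar : ∀ t₀ ∈ Set.Icc (0:ℝ) T, ∀ x₀ : ℝ,
      w 0 (x₀ - t₀ * w t₀ x₀) = w t₀ x₀ := by
    intro t₀ ht₀ x₀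
    set c : ℝ := w t₀ x₀ with hc
    set X : ℝ → ℝ := fun s => x₀ + c * (s - t₀) with hX
    set g : ℝ → ℝ := fun s => w s (X s) with hg
    -- clamp for the vector field
    set σ : ℝ → ℝ := fun s => max 0 (min s T) with hσ
    have hσmem : ∀ s, σ s ∈ Set.Icc (0:ℝ) T := by
      intro s
      constructor
      · exact le_max_left _ _
      · exact max_le (le_of_lt hT) (min_le_right _ _)
    have hσeq : ∀ s ∈ Set.Icc (0:ℝ) T, σ s = s := by
      intro s hs
      simp only [hσ]
      rw [min_eq_left hs.2, max_eq_right hs.1]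
    set v : ℝ → ℝ → ℝ := fun s y => (c - y) * deriv (fun x' => w (σ s) x') (X s) with hv
    set K : NNReal := B.toNNReal with hK
    have hlip : ∀ s, LipschitzOnWith K (v s) Set.univ := by
      intro s
      apply LipschitzWith.lipschitzOnWith
      apply LipschitzWith.of_dist_le_mul
      intro y y'
      simp only [hv, Real.dist_eq]
      have : (c - y) * deriv (fun x' => w (σ s) x') (X s)
          - (c - y') * deriv (fun x' => w (σ s) x') (X s)
          = (y' - y) * deriv (fun x' => w (σ s) x') (X s) := by ring
      rw [this, abs_mul]
      have hb := (hB (σ s) (hσmem s) (X s)).2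
      have hBK : B ≤ (K : ℝ) := Real.le_coe_toNNReal B
      have : |y' - y| = |y - y'| := abs_sub_comm _ _
      rw [this]
      calc |y - y'| * |deriv (fun x' => w (σ s) x') (X s)|
          ≤ |y - y'| * B := by
            exact mul_le_mul_of_nonneg_left hb (abs_nonneg _)
        _ ≤ |y - y'| * (K : ℝ) := by
            exact mul_le_mul_of_nonneg_left hBK (abs_nonneg _)
        _ = (K : ℝ) * |y - y'| := mul_comm _ _
    -- derivative of g within Icc 0 T
    have hgderiv : ∀ s ∈ Set.Icc (0:ℝ) T,
        HasDerivWithinAt g (v s (g s)) (Set.Icc 0 T) s := by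
      intro s hs
      have hcurve : HasDerivWithinAt (fun s : ℝ => ((s, X s) : ℝ × ℝ)) ((1:ℝ), c)
          (Set.Icc 0 T) s := by
        apply (hasDerivWithinAt_id s _).prodMk
        have : HasDerivAt X c s := by
          have : HasDerivAt (fun s : ℝ => x₀ + c * (s - t₀)) (c * 1) s := by
            apply HasDerivAt.const_add
            exact (((hasDerivAt_id s).sub_const t₀).const_mul c)
          rw [mul_one] at this; exact this
        exact this.hasDerivWithinAt
      have hcomp := HasFDerivWithinAt.comp_hasDerivWithinAt s (hHW s (X s) hs) hcurve
        (fun u hu => hSmem hu)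
      have heq : fderivWithin ℝ W S (s, X s) (1, c) = v s (g s) := by
        have hsplit : ((1:ℝ), c) = ((1:ℝ), (0:ℝ)) + c • ((0:ℝ), (1:ℝ)) := by
          simp [Prod.ext_iff]
        rw [hsplit, map_add, map_smul]
        rw [hburg2 s (X s) hs]
        have hσs := hσeq s hs
        simp only [hv, hg, hσs, smul_eq_mul]
        rw [hx_deriv' s (X s) hs]
        ring
      rw [heq] at hcomp
      exact hcomp
    -- continuity of g on Icc 0 T
    have hgcont : ContinuousOn g (Set.Icc 0 T) := by
      have hXc : Continuous X := by
        simp only [hX]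
        exact continuous_const.add (continuous_const.mul (continuous_id.sub continuous_const))
      have hcurve : ContinuousOn (fun s : ℝ => ((s, X s) : ℝ × ℝ)) (Set.Icc 0 T) :=
        (continuousOn_id).prodMk hXc.continuousOn
      exact hcont.comp hcurve (fun s hs => hSmem hs)
    -- constant solution
    have hconst : ∀ s ∈ Set.Icc (0:ℝ) t₀,
        HasDerivWithinAt (fun _ : ℝ => c) (v s c) (Set.Icc 0 T) s := by
      intro s hs
      have : v s c = 0 := by simp [hv]
      rw [this]
      exact hasDerivWithinAt_const s _ c
    -- apply uniqueness backwards from t₀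
    have huniq : Set.EqOn g (fun _ => c) (Set.Icc 0 t₀) := by
      apply ODE_solution_unique_of_mem_Icc_left (K := K) (v := v)
        (s := fun _ => (Set.univ : Set ℝ)) (fun s _ => hlip s)
      · exact hgcont.mono (Set.Icc_subset_Icc_right ht₀.2)
      · intro s hs
        have hsIcc : s ∈ Set.Icc (0:ℝ) T := ⟨le_of_lt hs.1, le_trans hs.2 ht₀.2⟩
        apply (hgderiv s hsIcc).mono_of_mem_nhdsWithin
        apply mem_nhdsWithin.2
        exact ⟨Set.Ioi 0, isOpen_Ioi, hs.1,
          fun y hy => ⟨le_of_lt hy.1, le_trans hy.2 hsIcc.2⟩⟩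
      · intro s _; trivial
      · exact continuousOn_const
      · intro s hs
        have hsIcc : s ∈ Set.Icc (0:ℝ) T := ⟨le_of_lt hs.1, le_trans hs.2 ht₀.2⟩
        apply (hconst s ⟨le_of_lt hs.1, hs.2⟩).mono_of_mem_nhdsWithin
        apply mem_nhdsWithin.2
        exact ⟨Set.Ioi 0, isOpen_Ioi, hs.1,
          fun y hy => ⟨le_of_lt hy.1, le_trans hy.2 hsIcc.2⟩⟩
      · intro s _; trivial
      · simp only [hg, hX]
        congr 1
        ring
    have h0 := huniq ⟨le_refl 0, ht₀.1⟩
    simp only [hg, hX] at h0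
    convert h0 using 2
    ring
  -- Step 2: differentiate the implicit relation
  intro t ht x
  set u : ℝ := deriv (fun x' => w t x') x with hu
  set Y : ℝ → ℝ := fun x' => x' - t * w t x' with hY
  set u₀ : ℝ := deriv (fun x' => w 0 x') (Y x) with hu0
  have h0T : (0:ℝ) ∈ Set.Icc (0:ℝ) T := ⟨le_refl 0, le_of_lt hT⟩
  have hident : (fun x' => w 0 (Y x')) = (fun x' => w t x') := by
    funext x'
    exact hchar t ht x'
  -- derivative of the RHS
  have hR : HasDerivAt (fun x' => w t x') u x := by
    rw [hu, hx_deriv' t x ht]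
    exact hx_deriv t x ht
  -- derivative of the LHS
  have hYd : HasDerivAt Y (1 - t * u) x := by
    have := ((hasDerivAt_id' x).sub ((hR.const_mul t)))
    exact this
  have hw0 : HasDerivAt (fun x' => w 0 x') u₀ (Y x) := by
    rw [hu0, hx_deriv' 0 (Y x) h0T]
    exact hx_deriv 0 (Y x) h0T
  have hL : HasDerivAt (fun x' => w 0 (Y x')) (u₀ * (1 - t * u)) x :=
    HasDerivAt.comp x hw0 hYd
  rw [hident] at hL
  have hkey : u₀ * (1 - t * u) = u := hL.unique hR
  obtain ⟨hu0pos, hu0M⟩ := hinit (Y x)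
  rw [← hu0] at hu0pos hu0M
  have htnn : 0 ≤ t := ht.1
  have hden : 0 < 1 + t * u₀ := by nlinarith
  have huval : u = u₀ / (1 + t * u₀) := by
    field_simp
    nlinarith [hkey]
  constructor
  · rw [huval]
    exact div_pos hu0pos hden
  · rw [huval]
    have hden2 : 0 < 1 + M * t := by nlinarith
    rw [div_le_div_iff₀ hden hden2]
    nlinarith
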